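/- For any n ≥ 2 agents there exists a successful call sequence of length 2n−3 after which all agents are experts: one fixed agent calls each of the other n−1 agents in turn, and then calls the first n−2 of them again. -/

import Mathlib

variable {A : Type*}

/-- Effect of one call `c` on a secret relation `S`:
`S ∪ ({(x,y),(y,x)} ∘ S)` where `c = (x,y)`. -/
def gstep (S : Set (A × A)) (c : A × A) : Set (A × A) :=
  S ∪ {p | (p.1 = c.1 ∧ (c.2, p.2) ∈ S) ∨ (p.1 = c.2 ∧ (c.1, p.2) ∈ S)}

/-- `S^σ`: the result of applying the call sequence `σ` to `S`. -/
def applyCalls (S : Set (A × A)) (σ : List (A × A)) : Set (A × A) :=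
  σ.foldl gstep S

/-- `I^σ`: the secret relation generated by `σ` from the identity relation. -/
def secrets (σ : List (A × A)) : Set (A × A) :=
  applyCalls {p | p.1 = p.2} σ

/-- `I^σ_x`: the set of secrets agent `x` knows after `σ`. -/
def secretsOf (σ : List (A × A)) (x : A) : Set A :=
  {z | (x, z) ∈ secrets σ}

lemma subset_gstep (S : Set (A × A)) (c : A × A) : S ⊆ gstep S c :=
  Set.subset_union_left

lemma subset_applyCalls (S : Set (A × A)) (σ : List (A × A)) : S ⊆ applyCalls S σ := by
  induction σ generalizing S with
  | nil => simp [applyCalls]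
  | cons c σ ih =>
    exact (subset_gstep S c).trans (ih (gstep S c))

lemma phase1 (a : A) : ∀ (m : List A) (S : Set (A × A)),
    (∀ b ∈ m, (b, b) ∈ S) → ∀ z, ((a, z) ∈ S ∨ z ∈ m) →
    (a, z) ∈ applyCalls S (m.map (fun b => (a, b))) := by
  intro m
  induction m with
  | nil =>
    intro S _ z hz
    simpa [applyCalls] using hz.resolve_right (by simp)
  | cons b m ih =>
    intro S hdiag z hz
    have key : ∀ w, ((a, w) ∈ S ∨ w = b) → (a, w) ∈ gstep S (a, b) := by
      intro w hw
      rcases hw with h | h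
      · exact Set.mem_union_left _ h
      · subst h
        exact Set.mem_union_right _ (Or.inl ⟨rfl, hdiag w (by simp)⟩)
    show (a, z) ∈ applyCalls (gstep S (a, b)) (m.map fun b => (a, b))
    apply ih
    · intro b' hb'
      exact subset_gstep _ _ (hdiag b' (by simp [hb']))
    · rcases hz with h | h
      · exact Or.inl (key z (Or.inl h))
      · rcases List.mem_cons.mp h with rfl | h
        · exact Or.inl (key z (Or.inr rfl))
        · exact Or.inr h

lemma phase2 (a : A) : ∀ (m : List A) (S : Set (A × A)),
    (∀ z, (a, z) ∈ S) →
    (∀ z, (a, z) ∈ applyCalls S (m.map (fun b => (a, b)))) ∧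
    (∀ b ∈ m, ∀ z, (b, z) ∈ applyCalls S (m.map (fun b => (a, b)))) := by
  intro m
  induction m with
  | nil =>
    intro S h
    exact ⟨fun z => by simpa [applyCalls] using h z, by simp⟩
  | cons b m ih =>
    intro S h
    have ha' : ∀ z, (a, z) ∈ gstep S (a, b) := fun z => Set.mem_union_left _ (h z)
    have hb' : ∀ z, (b, z) ∈ gstep S (a, b) :=
      fun z => Set.mem_union_right _ (Or.inr ⟨rfl, h z⟩)
    obtain ⟨h1, h2⟩ := ih (gstep S (a, b)) ha'
    have hgoal : applyCalls S ((b :: m).map (fun b => (a, b))) =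
        applyCalls (gstep S (a, b)) (m.map (fun b => (a, b))) := rfl
    rw [hgoal]
    refine ⟨h1, ?_⟩
    intro b' hb z
    rcases List.mem_cons.mp hb with h | hmem
    · subst h
      exact subset_applyCalls _ _ (hb' z)
    · exact h2 b' hmem z

/-- For `n ≥ 2` agents there is a successful call sequence of length `2n - 3`. -/
theorem successful_in_two_n_sub_three [Fintype A]
    (hn : 2 ≤ Fintype.card A) :
    ∃ σ : List (A × A), σ.length = 2 * Fintype.card A - 3 ∧
      secrets σ = (Set.univ : Set (A × A)) := by
  classical
  have hne : Nonempty A := Fintype.card_pos_iff.mp (by omega)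
  obtain ⟨a⟩ := hne
  set l : List A := (Finset.univ.erase a).toList with hl
  have hlen : l.length = Fintype.card A - 1 := by
    simp [hl, Finset.length_toList, Finset.card_erase_of_mem, Finset.card_univ]
  have hlne : l ≠ [] := by
    intro h
    rw [h] at hlen
    simp at hlen
    omega
  have hmeml : ∀ z : A, z ≠ a → z ∈ l := by
    intro z hz
    simp [hl, Finset.mem_toList, hz]
  set m : List A := l.dropLast with hm
  set c : A := l.getLast hlne with hc
  have hsplit : m ++ [c] = l := List.dropLast_append_getLast hlne
  have hmlen : m.length = Fintype.card A - 2 := by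
    have := List.length_dropLast (xs := l)
    rw [← hm] at this
    omega
  set f : A → A × A := fun b => (a, b) with hf
  refine ⟨m.map f ++ ((a, c) :: m.map f), ?_, ?_⟩
  · simp only [List.length_append, List.length_cons, List.length_map, hmlen]
    omega
  · set S₀ : Set (A × A) := {p | p.1 = p.2} with hS0
    have hdiag : ∀ b : A, (b, b) ∈ S₀ := fun b => rfl
    set S₁ : Set (A × A) := applyCalls S₀ (m.map f) with hS1
    set S₂ : Set (A × A) := gstep S₁ (a, c) with hS2
    have hcalc : secrets (m.map f ++ ((a, c) :: m.map f)) = applyCalls S₂ (m.map f) := by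
      simp only [secrets, applyCalls, List.foldl_append, List.foldl_cons, hS2, hS1, hS0]
    have hclass : ∀ z : A, z = a ∨ z ∈ m ∨ z = c := by
      intro z
      by_cases hz : z = a
      · exact Or.inl hz
      · have := hmeml z hz
        rw [← hsplit] at this
        rcases List.mem_append.mp this with h | h
        · exact Or.inr (Or.inl h)
        · exact Or.inr (Or.inr (by simpa using h))
    have hS1a : ∀ z : A, z = a ∨ z ∈ m → (a, z) ∈ S₁ := by
      intro z hz
      apply phase1 a m S₀ (fun b _ => hdiag b)
      rcases hz with h | h
      · subst h
        exact Or.inl (hdiag z)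
      · exact Or.inr h
    have hS1cc : (c, c) ∈ S₁ := subset_applyCalls _ _ (hdiag c)
    have hS2a : ∀ z : A, (a, z) ∈ S₂ := by
      intro z
      rcases hclass z with h | h | h
      · exact Set.mem_union_left _ (hS1a z (Or.inl h))
      · exact Set.mem_union_left _ (hS1a z (Or.inr h))
      · subst h
        exact Set.mem_union_right _ (Or.inl ⟨rfl, hS1cc⟩)
    have hS2c : ∀ z : A, (c, z) ∈ S₂ := by
      intro z
      rcases hclass z with h | h | h
      · exact Set.mem_union_right _ (Or.inr ⟨rfl, hS1a z (Or.inl h)⟩)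
      · exact Set.mem_union_right _ (Or.inr ⟨rfl, hS1a z (Or.inr h)⟩)
      · subst h
        exact Set.mem_union_left _ hS1cc
    obtain ⟨hfa, hfm⟩ := phase2 a m S₂ hS2a
    rw [hcalc]
    ext ⟨x, z⟩
    simp only [Set.mem_univ, iff_true]
    rcases hclass x with h | h | h
    · subst h
      exact hfa z
    · exact hfm x h z
    · subst h
      exact subset_applyCalls _ _ (hS2c z)
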